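/- For the CIAFTP algorithm for the Vervaat perpetuity with parameter β > 0, the expected number of backward steps satisfies E[T] ≤ 2(x_0+1)^β + 3, where x_0 = ⌈2/(1-(2/3)^{1/β})⌉ - 1. -/

import Mathlib

open MeasureTheory ProbabilityTheory
open scoped ENNReal Classical

namespace CIAFTP

variable (x0 : ℤ) (β : ℝ)

noncomputable def step (x : ℤ) (u : ℝ) : ℤ :=
  if u ≤ 1/3 then x + 1 else max (x - 1) (x0 - 1)

noncomputable def newU (x : ℤ) (u v : ℝ) : ℝ :=
  if 1/3 < u ∧ x0 - 1 < x then 2/3 + v/3 else 2/3 * v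

noncomputable def DD : ℕ → (ℕ → ℝ) → ℤ
  | 0, g => x0 - 2 + ⌈-Real.log (g 2) / Real.log 2⌉
  | (t+1), g => step x0 (DD t g) (g (3*t))

noncomputable def UU : ℕ → (ℕ → ℝ) → ℝ
  | 0, _ => 1
  | (t+1), g => newU x0 (DD x0 t g) (g (3*t)) (g (3*t+1))

def coal (s : ℕ) (g : ℕ → ℝ) : Prop :=
  UU x0 s g ≤ ((DD x0 s g : ℝ) + 1) ^ (-β)

def AA (t : ℕ) (g : ℕ → ℝ) : Prop := ∀ s, 1 ≤ s → s ≤ t → ¬ coal x0 β s g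

lemma measurable_DD (t : ℕ) : Measurable (DD x0 t) := by
  induction t with
  | zero =>
      simp only [DD]
      exact measurable_const.add
        (Int.measurable_ceil.comp (((Real.measurable_log.comp (measurable_pi_apply 2)).neg).div_const _))
  | succ t ih =>
      simp only [DD, step]
      exact Measurable.ite (measurableSet_le (measurable_pi_apply _) measurable_const)
        (ih.add measurable_const) ((ih.sub measurable_const).max measurable_const)

lemma measurable_UU (t : ℕ) : Measurable (UU x0 t) := by
  cases t with
  | zero => exact measurable_const
  | succ t =>
      show Measurable fun g : ℕ → ℝ => newU x0 (DD x0 t g) (g (3*t)) (g (3*t+1))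
      simp only [newU]
      refine Measurable.ite ?_ (measurable_const.add ((measurable_pi_apply _).div_const _))
        (measurable_const.mul (measurable_pi_apply _))
      refine (measurableSet_lt measurable_const (measurable_pi_apply _)).inter ?_
      exact (measurable_DD x0 t) (measurableSet_Ioi (a := x0 - 1))

lemma measurableSet_coal (s : ℕ) : MeasurableSet {g : ℕ → ℝ | coal x0 β s g} := by
  refine measurableSet_le (measurable_UU x0 s) ?_
  exact (measurable_from_top (f := fun z : ℤ => ((z : ℝ) + 1) ^ (-β))).comp (measurable_DD x0 s)

lemma measurableSet_AA (t : ℕ) : MeasurableSet {g : ℕ → ℝ | AA x0 β t g} := by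
  have : {g : ℕ → ℝ | AA x0 β t g} = ⋂ s ∈ Set.Icc 1 t, {g | coal x0 β s g}ᶜ := by
    ext g; simp [AA, Set.mem_Icc, and_imp]
  rw [this]
  exact MeasurableSet.biInter (Set.to_countable _) (fun s _ => (measurableSet_coal x0 β s).compl)

/-- the index set that `DD t`, `UU t`, `AA t` depend on -/
def S (t : ℕ) : Finset ℕ := insert 2 (Finset.range (3*t))

lemma S_mono {s t : ℕ} (h : s ≤ t) : S s ⊆ S t := by
  intro i hi
  simp only [S, Finset.mem_insert, Finset.mem_range] at hi ⊢
  rcases hi with h1 | h1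
  · exact Or.inl h1
  · exact Or.inr (by omega)

lemma DD_congr (t : ℕ) {g g' : ℕ → ℝ} (h : ∀ i ∈ S t, g i = g' i) :
    DD x0 t g = DD x0 t g' := by
  induction t with
  | zero =>
      simp only [DD]
      rw [h 2 (by simp [S])]
  | succ t ih =>
      simp only [DD]
      rw [ih (fun i hi => h i (S_mono (Nat.le_succ t) hi)),
        h (3*t) (by simp only [S, Finset.mem_insert, Finset.mem_range]; omega)]

lemma UU_congr (t : ℕ) {g g' : ℕ → ℝ} (h : ∀ i ∈ S t, g i = g' i) :
    UU x0 t g = UU x0 t g' := by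
  cases t with
  | zero => rfl
  | succ t =>
      simp only [UU]
      rw [DD_congr x0 t (fun i hi => h i (S_mono (Nat.le_succ t) hi)),
        h (3*t) (by simp only [S, Finset.mem_insert, Finset.mem_range]; omega),
        h (3*t+1) (by simp only [S, Finset.mem_insert, Finset.mem_range]; omega)]

lemma coal_congr (s : ℕ) {g g' : ℕ → ℝ} (h : ∀ i ∈ S s, g i = g' i) :
    coal x0 β s g ↔ coal x0 β s g' := by
  unfold coal
  rw [DD_congr x0 s h, UU_congr x0 s h]

lemma AA_congr (t : ℕ) {g g' : ℕ → ℝ} (h : ∀ i ∈ S t, g i = g' i) :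
    AA x0 β t g ↔ AA x0 β t g' := by
  unfold AA
  refine forall_congr' fun s => ?_
  refine imp_congr_right fun h1 => imp_congr_right fun h2 => ?_
  rw [coal_congr x0 β s (fun i hi => h i (S_mono h2 hi))]

lemma AA_zero (g : ℕ → ℝ) : AA x0 β 0 g := by intro s h1 h2; omega

lemma AA_succ (t : ℕ) (g : ℕ → ℝ) :
    AA x0 β (t+1) g ↔ AA x0 β t g ∧ ¬ coal x0 β (t+1) g := by
  constructor
  · intro h
    exact ⟨fun s h1 h2 => h s h1 (by omega), h (t+1) (by omega) le_rfl⟩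
  · rintro ⟨h1, h2⟩ s hs1 hs2
    rcases Nat.lt_or_ge s (t+1) with h | h
    · exact h1 s hs1 (by omega)
    · have : s = t + 1 := by omega
      subst this; exact h2

lemma DD_ge (t : ℕ) {g : ℕ → ℝ} (hg : g 2 ∈ Set.Ioo (0:ℝ) 1) :
    x0 - 1 ≤ DD x0 t g := by
  induction t with
  | zero =>
      simp only [DD]
      have h2 : (0:ℝ) < Real.log 2 := Real.log_pos (by norm_num)
      have hlog : Real.log (g 2) < 0 := Real.log_neg hg.1 hg.2
      have hpos : (0:ℝ) < -Real.log (g 2) / Real.log 2 :=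
        div_pos (by linarith) h2
      have h1 : (0:ℤ) < ⌈-Real.log (g 2) / Real.log 2⌉ :=
        Int.lt_ceil.mpr (by exact_mod_cast hpos)
      omega
  | succ t ih =>
      simp only [DD, step]
      split
      · omega
      · exact le_max_right _ _


noncomputable def unif : Measure ℝ := volume.restrict (Set.Ioo 0 1)

lemma unif_univ : unif Set.univ = 1 := by
  simp [unif, Real.volume_Ioo]

instance : IsProbabilityMeasure unif := ⟨unif_univ⟩

lemma unif_Iic_third : unif (Set.Iic (1/3 : ℝ)) = ENNReal.ofReal (1/3) := by
  rw [unif, Measure.restrict_apply measurableSet_Iic]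
  have : Set.Iic (1/3 : ℝ) ∩ Set.Ioo 0 1 = Set.Ioc 0 (1/3 : ℝ) := by
    ext u
    simp only [Set.mem_inter_iff, Set.mem_Iic, Set.mem_Ioo, Set.mem_Ioc]
    constructor
    · rintro ⟨h1, h2, h3⟩; exact ⟨h2, h1⟩
    · rintro ⟨h1, h2⟩; exact ⟨h2, h1, by linarith⟩
  rw [this, Real.volume_Ioc]
  norm_num

lemma unif_Ioi_third : unif (Set.Ioi (1/3 : ℝ)) = ENNReal.ofReal (2/3) := by
  rw [unif, Measure.restrict_apply measurableSet_Ioi]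
  have : Set.Ioi (1/3 : ℝ) ∩ Set.Ioo 0 1 = Set.Ioo (1/3 : ℝ) 1 := by
    ext u
    simp only [Set.mem_inter_iff, Set.mem_Ioi, Set.mem_Ioo]
    constructor
    · rintro ⟨h1, h2, h3⟩; exact ⟨h1, h3⟩
    · rintro ⟨h1, h2⟩; exact ⟨h1, by linarith, h2⟩
  rw [this, Real.volume_Ioo]
  norm_num

lemma lintegral_unif_ite (A B : ℝ≥0∞) :
    ∫⁻ u, (if u ≤ 1/3 then A else B) ∂unif
      = A * ENNReal.ofReal (1/3) + B * ENNReal.ofReal (2/3) := by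
  have h : ∀ u : ℝ, (if u ≤ 1/3 then A else B)
      = Set.indicator (Set.Iic (1/3:ℝ)) (fun _ => A) u
        + Set.indicator (Set.Ioi (1/3:ℝ)) (fun _ => B) u := by
    intro u
    by_cases h : u ≤ 1/3
    · rw [if_pos h, Set.indicator_of_mem (by exact h), Set.indicator_of_notMem (by simpa using h)]
      simp
    · rw [if_neg h, Set.indicator_of_notMem (by simpa using h),
        Set.indicator_of_mem (by simpa using not_le.mp h)]
      simp
  rw [lintegral_congr h,
    lintegral_add_left ((measurable_const (a := A)).indicator measurableSet_Iic),
    lintegral_indicator_const measurableSet_Iic,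
    lintegral_indicator_const measurableSet_Ioi, unif_Iic_third, unif_Ioi_third]

lemma unif_tail_le (a : ℝ) : unif (Set.Ioi a) ≤ ENNReal.ofReal (1 - min 1 a) := by
  rw [unif, Measure.restrict_apply measurableSet_Ioi]
  have hsub : Set.Ioi a ∩ Set.Ioo 0 1 ⊆ Set.Ioo (min 1 a) 1 := by
    rintro v ⟨h1, h2, h3⟩
    exact ⟨lt_of_le_of_lt (min_le_right 1 a) h1, h3⟩
  calc volume (Set.Ioi a ∩ Set.Ioo 0 1) ≤ volume (Set.Ioo (min 1 a) 1) := measure_mono hsub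
    _ = ENNReal.ofReal (1 - min 1 a) := Real.volume_Ioo

lemma lintegral_ite_zero (p : ℝ → Prop) (hp : MeasurableSet {v | p v}) (C : ℝ≥0∞) :
    ∫⁻ v, (if p v then 0 else C) ∂unif = C * unif {v | ¬ p v} := by
  have h : ∀ v : ℝ, (if p v then 0 else C) = Set.indicator {v | ¬ p v} (fun _ => C) v := by
    intro v
    by_cases h : p v
    · rw [if_pos h, Set.indicator_of_notMem (by simpa using h)]
    · rw [if_neg h, Set.indicator_of_mem (by simpa using h)]
  rw [lintegral_congr h, lintegral_indicator_const]
  exact hp.compl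


noncomputable def vv (x : ℤ) : ℝ := 3*((x:ℝ) - (x0:ℝ) + 1) + 2*((x0:ℝ)+1)^β

noncomputable def Psi (x : ℤ) (q : ℝ × ℝ) : ℝ≥0∞ :=
  if newU x0 x q.1 q.2 ≤ ((step x0 x q.1 : ℝ) + 1) ^ (-β) then 0
  else ENNReal.ofReal (vv x0 β (step x0 x q.1))

lemma measurable_step_fst (x : ℤ) : Measurable (fun q : ℝ × ℝ => step x0 x q.1) := by
  simp only [step]
  exact Measurable.ite (measurableSet_le measurable_fst measurable_const)
    measurable_const measurable_const

lemma measurable_Psi (x : ℤ) : Measurable (Psi x0 β x) := by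
  have hstep := measurable_step_fst x0 x
  have h2 : Measurable (fun q : ℝ × ℝ => ((step x0 x q.1 : ℝ) + 1) ^ (-β)) :=
    (measurable_from_top (f := fun z : ℤ => ((z:ℝ)+1)^(-β))).comp hstep
  have h3 : Measurable (fun q : ℝ × ℝ => ENNReal.ofReal (vv x0 β (step x0 x q.1))) :=
    (measurable_from_top (f := fun z : ℤ => ENNReal.ofReal (vv x0 β z))).comp hstep
  have h1 : Measurable (fun q : ℝ × ℝ => newU x0 x q.1 q.2) := by
    by_cases hP : x0 - 1 < x
    · simp only [newU, hP, and_true]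
      exact Measurable.ite (measurableSet_lt measurable_const measurable_fst)
        (measurable_const.add (measurable_snd.div_const _))
        (measurable_const.mul measurable_snd)
    · simp only [newU, hP, and_false, if_false]
      exact measurable_const.mul measurable_snd
  exact Measurable.ite (measurableSet_le h1 h2) measurable_const h3

section numeric

variable {x0 : ℤ} {β : ℝ}

lemma c_ge_two (hβ : 0 < β) (hx0 : 2 ≤ x0) : (2:ℝ) ≤ 2*((x0:ℝ)+1)^β := by
  have hb : (1:ℝ) ≤ (x0:ℝ)+1 := by
    have : (2:ℝ) ≤ (x0:ℝ) := by exact_mod_cast hx0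
    linarith
  have h1 : (1:ℝ) ≤ ((x0:ℝ)+1)^β := by
    have := Real.rpow_le_rpow_of_exponent_le hb (le_of_lt hβ) (y := 0)
    rwa [Real.rpow_zero] at this
  linarith

lemma vv_nonneg (hβ : 0 < β) (hx0 : 2 ≤ x0) {y : ℤ} (hy : x0 - 1 ≤ y) :
    0 ≤ vv x0 β y := by
  have h1 : ((x0:ℝ)) - 1 ≤ (y:ℝ) := by exact_mod_cast hy
  have := c_ge_two hβ hx0
  unfold vv; nlinarith

lemma m_facts (hβ : 0 < β) (hx0 : 2 ≤ x0) :
    0 ≤ min 1 (3/2 * ((x0:ℝ)+1)^(-β)) ∧ min 1 (3/2 * ((x0:ℝ)+1)^(-β)) ≤ 1 ∧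
      2 ≤ min 1 (3/2 * ((x0:ℝ)+1)^(-β)) * (2*((x0:ℝ)+1)^β) := by
  have hbpos : (0:ℝ) < (x0:ℝ)+1 := by
    have : (2:ℝ) ≤ (x0:ℝ) := by exact_mod_cast hx0
    linarith
  have hrpos : (0:ℝ) < ((x0:ℝ)+1)^(-β) := Real.rpow_pos_of_pos hbpos _
  refine ⟨le_min (by norm_num) (by positivity), min_le_left _ _, ?_⟩
  have hprod : ((x0:ℝ)+1)^(-β) * ((x0:ℝ)+1)^β = 1 := by
    rw [← Real.rpow_add hbpos]; simp
  rcases le_or_gt 1 (3/2 * ((x0:ℝ)+1)^(-β)) with h | h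
  · rw [min_eq_left h]
    have := c_ge_two hβ hx0
    linarith
  · rw [min_eq_right (le_of_lt h)]
    nlinarith

lemma r_le_rpow_x0 (hβ : 0 < β) (hx0 : 2 ≤ x0) :
    ((x0:ℝ)+1)^(-β) ≤ ((x0:ℝ))^(-β) := by
  have hx0r : (2:ℝ) ≤ (x0:ℝ) := by exact_mod_cast hx0
  rw [Real.rpow_neg (by linarith), Real.rpow_neg (by linarith)]
  have h1 : ((x0:ℝ))^β ≤ ((x0:ℝ)+1)^β :=
    Real.rpow_le_rpow (by linarith) (by linarith) (le_of_lt hβ)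
  have h2 : (0:ℝ) < ((x0:ℝ))^β := Real.rpow_pos_of_pos (by linarith) _
  exact inv_anti₀ h2 h1

end numeric

lemma inner_v_low (hβ : 0 < β) (hx0 : 2 ≤ x0) (u : ℝ) :
    ∫⁻ v, Psi x0 β (x0-1) (u, v) ∂unif
      ≤ (if u ≤ 1/3 then ENNReal.ofReal (vv x0 β x0) else ENNReal.ofReal (vv x0 β (x0-1)))
          * ENNReal.ofReal (1 - min 1 (3/2 * ((x0:ℝ)+1)^(-β))) := by
  have hnewU : ∀ v : ℝ, newU x0 (x0-1) u v = 2/3*v := by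
    intro v; simp [newU]
  have key : ∀ (y : ℤ) (s : ℝ), ((x0:ℝ)+1)^(-β) ≤ s →
      ∫⁻ v, (if 2/3*v ≤ s then 0 else ENNReal.ofReal (vv x0 β y)) ∂unif
        ≤ ENNReal.ofReal (vv x0 β y)
            * ENNReal.ofReal (1 - min 1 (3/2 * ((x0:ℝ)+1)^(-β))) := by
    intro y s hs
    rw [lintegral_ite_zero (fun v => 2/3*v ≤ s)
      (measurableSet_le (measurable_id.const_mul _) measurable_const) _]
    have hset : {v : ℝ | ¬ (2/3*v ≤ s)} = Set.Ioi (3/2*s) := by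
      ext v
      simp only [Set.mem_setOf_eq, Set.mem_Ioi, not_le]
      constructor <;> intro h <;> linarith
    rw [hset]
    refine mul_le_mul_right ?_ _
    refine le_trans (unif_tail_le _) (ENNReal.ofReal_le_ofReal ?_)
    have : min 1 (3/2 * ((x0:ℝ)+1)^(-β)) ≤ min 1 (3/2*s) :=
      min_le_min le_rfl (by linarith)
    linarith
  by_cases hu : u ≤ 1/3
  · have hstep : step x0 (x0-1) u = x0 := by
      rw [step, if_pos hu]; ring
    have heq : ∀ v : ℝ, Psi x0 β (x0-1) (u, v)
        = (if 2/3*v ≤ ((x0:ℝ)+1)^(-β) then 0 else ENNReal.ofReal (vv x0 β x0)) := by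
      intro v
      simp only [Psi, hstep, hnewU]
    rw [lintegral_congr heq, if_pos hu]
    exact key x0 _ le_rfl
  · have hstep : step x0 (x0-1) u = x0 - 1 := by
      rw [step, if_neg hu]
      exact max_eq_right (by omega)
    have heq : ∀ v : ℝ, Psi x0 β (x0-1) (u, v)
        = (if 2/3*v ≤ ((x0:ℝ))^(-β) then 0 else ENNReal.ofReal (vv x0 β (x0-1))) := by
      intro v
      simp only [Psi, hstep, hnewU]
      norm_num
    rw [lintegral_congr heq, if_neg hu]
    exact key (x0-1) _ (r_le_rpow_x0 hβ hx0)

lemma inner_low (hβ : 0 < β) (hx0 : 2 ≤ x0) :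
    ∫⁻ q, Psi x0 β (x0-1) q ∂(unif.prod unif) ≤ ENNReal.ofReal (vv x0 β (x0-1) - 1) := by
  rw [lintegral_prod _ (measurable_Psi x0 β _).aemeasurable]
  set m := min 1 (3/2 * ((x0:ℝ)+1)^(-β)) with hm
  obtain ⟨hm0, hm1, hmc⟩ := m_facts hβ hx0 (x0 := x0)
  calc ∫⁻ u, ∫⁻ v, Psi x0 β (x0-1) (u, v) ∂unif ∂unif
      ≤ ∫⁻ u, (if u ≤ 1/3 then ENNReal.ofReal (vv x0 β x0)
            else ENNReal.ofReal (vv x0 β (x0-1))) * ENNReal.ofReal (1 - m) ∂unif :=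
        lintegral_mono (fun u => inner_v_low x0 β hβ hx0 u)
    _ = (ENNReal.ofReal (vv x0 β x0) * ENNReal.ofReal (1/3)
          + ENNReal.ofReal (vv x0 β (x0-1)) * ENNReal.ofReal (2/3)) * ENNReal.ofReal (1 - m) := by
        rw [lintegral_mul_const _ (Measurable.ite
          (show MeasurableSet {u : ℝ | u ≤ 1/3} from measurableSet_Iic)
          (measurable_const (a := ENNReal.ofReal (vv x0 β x0)))
          (measurable_const (a := ENNReal.ofReal (vv x0 β (x0-1))))), lintegral_unif_ite]
    _ ≤ ENNReal.ofReal (vv x0 β (x0-1) - 1) := by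
        have ha : vv x0 β x0 = 3 + 2*((x0:ℝ)+1)^β := by unfold vv; ring
        have hb : vv x0 β (x0-1) = 2*((x0:ℝ)+1)^β := by unfold vv; push_cast; ring
        have hc2 := c_ge_two hβ hx0
        set c := 2*((x0:ℝ)+1)^β with hcdef
        rw [ha, hb]
        rw [← ENNReal.ofReal_mul (by linarith), ← ENNReal.ofReal_mul (by linarith),
          ← ENNReal.ofReal_add (by positivity) (by positivity),
          ← ENNReal.ofReal_mul (by positivity)]
        refine ENNReal.ofReal_le_ofReal ?_
        nlinarith

lemma inner_hi (hβ : 0 < β) (hx0 : 2 ≤ x0) {x : ℤ} (hx : x0 ≤ x) :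
    ∫⁻ q, Psi x0 β x q ∂(unif.prod unif) ≤ ENNReal.ofReal (vv x0 β x - 1) := by
  rw [lintegral_prod _ (measurable_Psi x0 β _).aemeasurable]
  calc ∫⁻ u, ∫⁻ v, Psi x0 β x (u, v) ∂unif ∂unif
      ≤ ∫⁻ u, (if u ≤ 1/3 then ENNReal.ofReal (vv x0 β (x+1))
            else ENNReal.ofReal (vv x0 β (x-1))) ∂unif := by
        refine lintegral_mono (fun u => ?_)
        by_cases hu : u ≤ 1/3
        · have hstep : step x0 x u = x + 1 := by rw [step, if_pos hu]
          rw [if_pos hu]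
          calc ∫⁻ v, Psi x0 β x (u, v) ∂unif
              ≤ ∫⁻ _, ENNReal.ofReal (vv x0 β (x+1)) ∂unif := by
                refine lintegral_mono (fun v => ?_)
                simp only [Psi, hstep]
                split
                · exact zero_le
                · exact le_rfl
            _ = ENNReal.ofReal (vv x0 β (x+1)) := by
                rw [lintegral_const, unif_univ, mul_one]
        · have hstep : step x0 x u = x - 1 := by
            rw [step, if_neg hu]
            exact max_eq_left (by omega)
          rw [if_neg hu]
          calc ∫⁻ v, Psi x0 β x (u, v) ∂unif
              ≤ ∫⁻ _, ENNReal.ofReal (vv x0 β (x-1)) ∂unif := by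
                refine lintegral_mono (fun v => ?_)
                simp only [Psi, hstep]
                split
                · exact zero_le
                · exact le_rfl
            _ = ENNReal.ofReal (vv x0 β (x-1)) := by
                rw [lintegral_const, unif_univ, mul_one]
    _ ≤ ENNReal.ofReal (vv x0 β x - 1) := by
        rw [lintegral_unif_ite]
        have h1 : x0 - 1 ≤ x + 1 := by omega
        have h2 : x0 - 1 ≤ x - 1 := by omega
        rw [← ENNReal.ofReal_mul (vv_nonneg hβ hx0 h1), ← ENNReal.ofReal_mul (vv_nonneg hβ hx0 h2),
          ← ENNReal.ofReal_add (by nlinarith [vv_nonneg hβ hx0 h1]) (by nlinarith [vv_nonneg hβ hx0 h2])]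
        refine ENNReal.ofReal_le_ofReal (le_of_eq ?_)
        unfold vv; push_cast; ring

lemma inner_bound (hβ : 0 < β) (hx0 : 2 ≤ x0) {x : ℤ} (hx : x0 - 1 ≤ x) :
    ∫⁻ q, Psi x0 β x q ∂(unif.prod unif) ≤ ENNReal.ofReal (vv x0 β x - 1) := by
  rcases eq_or_lt_of_le hx with h | h
  · rw [← h]; exact inner_low x0 β hβ hx0
  · exact inner_hi x0 β hβ hx0 (by omega)

lemma natCast_tsum (n : ℕ) : (n : ℝ≥0∞) = ∑' k : ℕ, (if k < n then (1:ℝ≥0∞) else 0) := by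
  rw [tsum_eq_sum (s := Finset.range n) (fun k hk => if_neg (by simpa using hk))]
  rw [Finset.sum_congr rfl (fun k hk => if_pos (Finset.mem_range.mp hk))]
  simp

lemma measurable_ceil_log : Measurable (fun u : ℝ => ⌈-Real.log u / Real.log 2⌉) :=
  Int.measurable_ceil.comp ((Real.measurable_log.neg).div_const _)

lemma measurableSet_tail (j : ℕ) :
    MeasurableSet {u : ℝ | (j:ℤ) < ⌈-Real.log u / Real.log 2⌉ - 1} := by
  have : {u : ℝ | (j:ℤ) < ⌈-Real.log u / Real.log 2⌉ - 1}
      = (fun u : ℝ => ⌈-Real.log u / Real.log 2⌉) ⁻¹' {z : ℤ | (j:ℤ) < z - 1} := rfl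
  rw [this]
  exact measurable_ceil_log trivial

lemma unif_tail_geom (j : ℕ) :
    unif {u : ℝ | (j:ℤ) < ⌈-Real.log u / Real.log 2⌉ - 1} ≤ ENNReal.ofReal ((2:ℝ)⁻¹ ^ (j+1)) := by
  rw [unif, Measure.restrict_apply (measurableSet_tail j)]
  have hlog2 : (0:ℝ) < Real.log 2 := Real.log_pos (by norm_num)
  have hpow : (0:ℝ) < (2:ℝ)⁻¹ ^ (j+1) := by positivity
  have hsub : {u : ℝ | (j:ℤ) < ⌈-Real.log u / Real.log 2⌉ - 1} ∩ Set.Ioo 0 1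
      ⊆ Set.Ioo 0 ((2:ℝ)⁻¹ ^ (j+1)) := by
    rintro u ⟨h1, hu0, hu1⟩
    refine ⟨hu0, ?_⟩
    have h2 : ((j:ℤ) + 1 : ℤ) < ⌈-Real.log u / Real.log 2⌉ := by
      simp only [Set.mem_setOf_eq] at h1; omega
    have h3 : ((j:ℝ) + 1) < -Real.log u / Real.log 2 := by exact_mod_cast Int.lt_ceil.mp h2
    have h4 : ((j:ℝ) + 1) * Real.log 2 < -Real.log u := (lt_div_iff₀ hlog2).mp h3
    have h5 : Real.log u < Real.log ((2:ℝ)⁻¹ ^ (j+1)) := by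
      rw [Real.log_pow, Real.log_inv]
      push_cast
      linarith
    exact (Real.log_lt_log_iff hu0 hpow).mp h5
  calc volume ({u : ℝ | (j:ℤ) < ⌈-Real.log u / Real.log 2⌉ - 1} ∩ Set.Ioo 0 1)
      ≤ volume (Set.Ioo 0 ((2:ℝ)⁻¹ ^ (j+1))) := measure_mono hsub
    _ = ENNReal.ofReal ((2:ℝ)⁻¹ ^ (j+1)) := by rw [Real.volume_Ioo, sub_zero]

lemma lintegral_K_le :
    ∫⁻ u, (((⌈-Real.log u / Real.log 2⌉ - 1).toNat : ℕ) : ℝ≥0∞) ∂unif ≤ 1 := by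
  have hrw : ∀ u : ℝ, (((⌈-Real.log u / Real.log 2⌉ - 1).toNat : ℕ) : ℝ≥0∞)
      = ∑' j : ℕ, Set.indicator {u : ℝ | (j:ℤ) < ⌈-Real.log u / Real.log 2⌉ - 1}
          (fun _ => (1:ℝ≥0∞)) u := by
    intro u
    rw [natCast_tsum]
    refine tsum_congr (fun j => ?_)
    by_cases h : j < (⌈-Real.log u / Real.log 2⌉ - 1).toNat
    · rw [if_pos h, Set.indicator_apply, if_pos (show u ∈ _ from Int.lt_toNat.mp h)]
    · rw [if_neg h, Set.indicator_apply, if_neg (show u ∉ {u : ℝ | (j:ℤ) < ⌈-Real.log u / Real.log 2⌉ - 1} from fun hm => h (Int.lt_toNat.mpr hm))]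
  calc ∫⁻ u, (((⌈-Real.log u / Real.log 2⌉ - 1).toNat : ℕ) : ℝ≥0∞) ∂unif
      = ∑' j : ℕ, unif {u : ℝ | (j:ℤ) < ⌈-Real.log u / Real.log 2⌉ - 1} := by
        rw [lintegral_congr hrw,
          lintegral_tsum (fun j => (measurable_const.indicator (measurableSet_tail j)).aemeasurable)]
        exact tsum_congr (fun j => lintegral_indicator_const (measurableSet_tail j) 1 |>.trans (one_mul _))
    _ ≤ ∑' j : ℕ, ENNReal.ofReal ((2:ℝ)⁻¹ ^ (j+1)) := ENNReal.tsum_le_tsum (fun j => unif_tail_geom j)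
    _ = ∑' j : ℕ, ((2:ℝ≥0∞)⁻¹) ^ (j+1) := by
        refine tsum_congr (fun j => ?_)
        rw [ENNReal.ofReal_pow (by norm_num), ENNReal.ofReal_inv_of_pos (by norm_num),
          ENNReal.ofReal_ofNat]
    _ = 1 := by
        rw [ENNReal.tsum_geometric_add_one, ENNReal.one_sub_inv_two, inv_inv]
        exact ENNReal.inv_mul_cancel (by norm_num) (by norm_num)

lemma W0_bound {x0 : ℤ} {β : ℝ} (hβ : 0 < β) (hx0 : 2 ≤ x0) :
    ∫⁻ u, ENNReal.ofReal (vv x0 β (x0 - 2 + ⌈-Real.log u / Real.log 2⌉)) ∂unif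
      ≤ ENNReal.ofReal (2*((x0:ℝ)+1)^β + 3) := by
  have hc0 : (0:ℝ) ≤ 2*((x0:ℝ)+1)^β := by linarith [c_ge_two hβ hx0]
  have hae : ∀ᵐ u ∂unif, u ∈ Set.Ioo (0:ℝ) 1 := ae_restrict_mem measurableSet_Ioo
  have hKmeas : Measurable fun u : ℝ => (((⌈-Real.log u / Real.log 2⌉ - 1).toNat : ℕ) : ℝ≥0∞) :=
    (measurable_from_top (f := fun z : ℤ => (((z - 1).toNat : ℕ) : ℝ≥0∞))).comp measurable_ceil_log
  calc ∫⁻ u, ENNReal.ofReal (vv x0 β (x0 - 2 + ⌈-Real.log u / Real.log 2⌉)) ∂unif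
      ≤ ∫⁻ u, (3 * (((⌈-Real.log u / Real.log 2⌉ - 1).toNat : ℕ) : ℝ≥0∞)
          + ENNReal.ofReal (2*((x0:ℝ)+1)^β)) ∂unif := by
        refine lintegral_mono_ae (hae.mono fun u hu => ?_)
        have hlog2 : (0:ℝ) < Real.log 2 := Real.log_pos (by norm_num)
        have hlogu : Real.log u < 0 := Real.log_neg hu.1 hu.2
        have hj : (0:ℤ) < ⌈-Real.log u / Real.log 2⌉ :=
          Int.lt_ceil.mpr (by exact_mod_cast div_pos (by linarith) hlog2)
        have hvv : vv x0 β (x0 - 2 + ⌈-Real.log u / Real.log 2⌉)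
            = 3*((⌈-Real.log u / Real.log 2⌉:ℝ)-1) + 2*((x0:ℝ)+1)^β := by
          unfold vv; push_cast; ring
        rw [hvv]
        refine le_trans ENNReal.ofReal_add_le (add_le_add ?_ le_rfl)
        rw [ENNReal.ofReal_mul (by norm_num), ENNReal.ofReal_ofNat]
        refine mul_le_mul_right (le_of_eq ?_) _
        have h1 : (((⌈-Real.log u / Real.log 2⌉ - 1).toNat : ℕ) : ℝ)
            = (⌈-Real.log u / Real.log 2⌉:ℝ) - 1 := by
          exact_mod_cast Int.toNat_of_nonneg (by omega)
        rw [← h1, ENNReal.ofReal_natCast]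
    _ = 3 * (∫⁻ u, (((⌈-Real.log u / Real.log 2⌉ - 1).toNat : ℕ) : ℝ≥0∞) ∂unif)
        + ENNReal.ofReal (2*((x0:ℝ)+1)^β) := by
        rw [lintegral_add_right _ measurable_const, lintegral_const_mul _ hKmeas,
          lintegral_const, unif_univ, mul_one]
    _ ≤ 3 * 1 + ENNReal.ofReal (2*((x0:ℝ)+1)^β) := add_le_add (mul_le_mul_right lintegral_K_le _) le_rfl
    _ ≤ ENNReal.ofReal (2*((x0:ℝ)+1)^β + 3) := by
        rw [mul_one, ENNReal.ofReal_add hc0 (by norm_num), ENNReal.ofReal_ofNat, add_comm]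

end CIAFTP
namespace CIAFTP

lemma x0_ge {β : ℝ} (hβ : 0 < β) {x0 : ℤ} (hx0 : x0 = ⌈(2 : ℝ) / (1 - (2/3 : ℝ) ^ (1/β))⌉ - 1) :
    2 ≤ x0 := by
  have h1 : (0:ℝ) < (2/3 : ℝ)^((1:ℝ)/β) := Real.rpow_pos_of_pos (by norm_num) _
  have h2 : (2/3 : ℝ)^((1:ℝ)/β) < 1 := Real.rpow_lt_one (by norm_num) (by norm_num) (by positivity)
  have h3 : (0:ℝ) < 1 - (2/3 : ℝ)^((1:ℝ)/β) := by linarith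
  have h4 : (2:ℝ) < 2 / (1 - (2/3 : ℝ)^((1:ℝ)/β)) := by
    rw [lt_div_iff₀ h3]; linarith
  have h5 : (2:ℤ) < ⌈(2 : ℝ) / (1 - (2/3 : ℝ) ^ (1/β))⌉ := by
    refine Int.lt_ceil.mpr ?_
    push_cast
    exact h4
  omega

end CIAFTP


/-- CIAFTP for the Vervaat perpetuity with parameter `β`: the dominating chain `D`
(run backward in time, `D t = D_{-t}`) is driven by i.i.d. uniforms `ξ (3*t)`,
started at `D 0 = x0 - 2 + G` with `G` geometric(1/2) built from the uniform `ξ 2`;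
the imputed uniforms `U t = U_{-t}` are built from `ξ (3*t+1)` according to the
direction of the forward move; `T` is the first backward step at which the
multigamma coupler coalesces, i.e. `U t ≤ (D t + 1)^{-β}`.  Then
`E[T] ≤ 2 (x0+1)^β + 3`. -/
theorem expected_time_upper_bound {Ω : Type*} [MeasureSpace Ω]
    [IsProbabilityMeasure (ℙ : Measure Ω)]
    (β : ℝ) (hβ : 0 < β) (x0 : ℤ)
    (hx0 : x0 = ⌈(2 : ℝ) / (1 - (2/3 : ℝ) ^ (1/β))⌉ - 1)
    (ξ : ℕ → Ω → ℝ) (hξm : ∀ n, Measurable (ξ n))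
    (hξi : iIndepFun ξ ℙ)
    (hξd : ∀ n, Measure.map (ξ n) ℙ = volume.restrict (Set.Ioo 0 1))
    (D : ℕ → Ω → ℤ) (U : ℕ → Ω → ℝ) (T : Ω → ℕ)
    (hD0 : ∀ ω, D 0 ω = x0 - 2 + ⌈-Real.log (ξ 2 ω) / Real.log 2⌉)
    (hDstep : ∀ t ω, D (t + 1) ω =
      if ξ (3 * t) ω ≤ 1/3 then D t ω + 1 else max (D t ω - 1) (x0 - 1))
    (hU : ∀ t ω, U (t + 1) ω =
      if 1/3 < ξ (3 * t) ω ∧ x0 - 1 < D t ω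
        then 2/3 + ξ (3 * t + 1) ω / 3
        else 2/3 * ξ (3 * t + 1) ω)
    (hT : ∀ ω, T ω = sInf {t : ℕ | 1 ≤ t ∧ U t ω ≤ ((D t ω : ℝ) + 1) ^ (-β)}) :
    ∫⁻ ω, (T ω : ENNReal) ∂ℙ ≤ ENNReal.ofReal (2 * ((x0 : ℝ) + 1) ^ β + 3) := by
  classical
  open CIAFTP in
  have hx02 : 2 ≤ x0 := CIAFTP.x0_ge hβ hx0
  set ξv : Ω → (ℕ → ℝ) := fun ω i => ξ i ω with hξvdef
  have hξvmeas : Measurable ξv := measurable_pi_lambda _ (fun i => hξm i)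
  -- identification of D and U with the abstract recursions
  have hDeq : ∀ t ω, D t ω = CIAFTP.DD x0 t (ξv ω) := by
    intro t
    induction t with
    | zero => intro ω; rw [hD0]; rfl
    | succ t ih => intro ω; rw [hDstep, ih]; rfl
  have hUeq : ∀ t ω, U (t+1) ω = CIAFTP.UU x0 (t+1) (ξv ω) := by
    intro t ω; rw [hU, hDeq]; rfl
  -- the good event
  have hae2 : ∀ᵐ ω ∂ℙ, ξ 2 ω ∈ Set.Ioo (0:ℝ) 1 := by
    have hpre : ℙ (ξ 2 ⁻¹' (Set.Ioo (0:ℝ) 1)ᶜ) = 0 := by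
      rw [← Measure.map_apply (hξm 2) measurableSet_Ioo.compl, hξd 2,
        Measure.restrict_apply measurableSet_Ioo.compl]
      simp
    rw [ae_iff]
    have heq : {ω | ¬ ξ 2 ω ∈ Set.Ioo (0:ℝ) 1} = ξ 2 ⁻¹' (Set.Ioo (0:ℝ) 1)ᶜ := rfl
    rw [heq]
    exact hpre
  -- basic objects
  set Aset : ℕ → Set Ω := fun t => ξv ⁻¹' {g | CIAFTP.AA x0 β t g} with hAsetdef
  have hAsetMeas : ∀ t, MeasurableSet (Aset t) :=
    fun t => hξvmeas (CIAFTP.measurableSet_AA x0 β t)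
  set W : ℕ → ℝ≥0∞ := fun t => ∫⁻ ω, Set.indicator {g | CIAFTP.AA x0 β t g}
      (fun g => ENNReal.ofReal (CIAFTP.vv x0 β (CIAFTP.DD x0 t g))) (ξv ω) ∂ℙ with hWdef
  -- Key one-step inequality
  have key : ∀ t, W (t+1) + ℙ (Aset t) ≤ W t := by
    intro t
    -- independence setup
    set S : Finset ℕ := CIAFTP.S t with hSdef
    set Tf : Finset ℕ := {3*t, 3*t+1} with hTfdef
    have hdisj : Disjoint S Tf := by
      rw [Finset.disjoint_left]
      intro i hi hiT
      simp only [hSdef, CIAFTP.S, Finset.mem_insert, Finset.mem_range] at hi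
      simp only [hTfdef, Finset.mem_insert, Finset.mem_singleton] at hiT
      omega
    have hindep0 : IndepFun (fun ω (i : S) => ξ i ω) (fun ω (i : Tf) => ξ i ω) ℙ :=
      hξi.indepFun_finset S Tf hdisj hξm
    set ext : ({x // x ∈ S} → ℝ) → (ℕ → ℝ) :=
      fun h i => if hi : i ∈ S then h ⟨i, hi⟩ else 0 with hextdef
    have hextMeas : Measurable ext := by
      refine measurable_pi_lambda _ (fun i => ?_)
      by_cases hi : i ∈ S
      · simp only [hextdef, dif_pos hi]; exact measurable_pi_apply _
      · simp only [hextdef, dif_neg hi]; exact measurable_const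
    set φ : ({x // x ∈ S} → ℝ) → ℤ × ℝ := fun h =>
      (CIAFTP.DD x0 t (ext h),
        Set.indicator {g | CIAFTP.AA x0 β t g} (fun _ => (1:ℝ)) (ext h)) with hφdef
    have hφmeas : Measurable φ :=
      ((CIAFTP.measurable_DD x0 t).comp hextMeas).prodMk
        ((measurable_const.indicator (CIAFTP.measurableSet_AA x0 β t)).comp hextMeas)
    set ψ : ({x // x ∈ Tf} → ℝ) → ℝ × ℝ := fun h =>
      (h ⟨3*t, by simp [hTfdef]⟩, h ⟨3*t+1, by simp [hTfdef]⟩) with hψdef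
    have hψmeas : Measurable ψ := (measurable_pi_apply _).prodMk (measurable_pi_apply _)
    set X : Ω → ℤ × ℝ := fun ω => (CIAFTP.DD x0 t (ξv ω),
      Set.indicator {g | CIAFTP.AA x0 β t g} (fun _ => (1:ℝ)) (ξv ω)) with hXdef
    set Y : Ω → ℝ × ℝ := fun ω => (ξ (3*t) ω, ξ (3*t+1) ω) with hYdef
    have hagree : ∀ ω, ∀ i ∈ S, ext (fun i : {x // x ∈ S} => ξ i ω) i = ξv ω i := by
      intro ω i hi
      simp only [hextdef, dif_pos hi]; rfl
    have hXcomp : X = φ ∘ (fun ω (i : S) => ξ i ω) := by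
      funext ω
      simp only [hXdef, hφdef, Function.comp_apply]
      have h1 : CIAFTP.DD x0 t (ext (fun i : {x // x ∈ S} => ξ i ω)) = CIAFTP.DD x0 t (ξv ω) :=
        CIAFTP.DD_congr x0 t (hagree ω)
      have h2 : (CIAFTP.AA x0 β t (ext (fun i : {x // x ∈ S} => ξ i ω)))
          ↔ CIAFTP.AA x0 β t (ξv ω) := CIAFTP.AA_congr x0 β t (hagree ω)
      rw [h1.symm]
      congr 1
      simp only [Set.indicator_apply, Set.mem_setOf_eq]
      rw [if_congr h2.symm rfl rfl]
    have hYcomp : Y = ψ ∘ (fun ω (i : Tf) => ξ i ω) := rfl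
    have hIndep : IndepFun X Y ℙ := by
      rw [hXcomp, hYcomp]
      exact hindep0.comp hφmeas hψmeas
    have hXmeas : Measurable X :=
      ((CIAFTP.measurable_DD x0 t).comp hξvmeas).prodMk
        ((measurable_const.indicator (CIAFTP.measurableSet_AA x0 β t)).comp hξvmeas)
    have hYmeas : Measurable Y := (hξm _).prodMk (hξm _)
    have hYlaw : Measure.map Y ℙ = CIAFTP.unif.prod CIAFTP.unif := by
      have h2 : IndepFun (ξ (3*t)) (ξ (3*t+1)) ℙ := hξi.indepFun (by omega)
      rw [show Y = fun ω => (ξ (3*t) ω, ξ (3*t+1) ω) from rfl,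
        (indepFun_iff_map_prod_eq_prod_map_map (hξm _).aemeasurable (hξm _).aemeasurable).mp h2,
        hξd, hξd]
      rfl
    have hXYlaw : Measure.map (fun ω => (X ω, Y ω)) ℙ
        = (Measure.map X ℙ).prod (CIAFTP.unif.prod CIAFTP.unif) := by
      rw [← hYlaw]
      exact (indepFun_iff_map_prod_eq_prod_map_map hXmeas.aemeasurable
        hYmeas.aemeasurable).mp hIndep
    -- the integrand as a function of (X, Y)
    set F : ℤ × ℝ → ℝ × ℝ → ℝ≥0∞ := fun p q =>
      ENNReal.ofReal p.2 * CIAFTP.Psi x0 β p.1 q with hFdef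
    have hFmeas : Measurable (fun z : (ℤ × ℝ) × (ℝ × ℝ) => F z.1 z.2) := by
      refine Measurable.mul ?_ ?_
      · exact ENNReal.measurable_ofReal.comp (measurable_fst.snd)
      · have h1 : Measurable (fun w : (ℝ × ℝ) × ℤ => CIAFTP.Psi x0 β w.2 w.1) :=
          measurable_from_prod_countable_left (fun x => CIAFTP.measurable_Psi x0 β x)
        exact h1.comp ((measurable_snd).prodMk (measurable_fst.fst))
    have hptwise : ∀ ω, Set.indicator {g | CIAFTP.AA x0 β (t+1) g}
        (fun g => ENNReal.ofReal (CIAFTP.vv x0 β (CIAFTP.DD x0 (t+1) g))) (ξv ω)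
        = F (X ω) (Y ω) := by
      intro ω
      have hPsi : CIAFTP.Psi x0 β (CIAFTP.DD x0 t (ξv ω)) (ξ (3*t) ω, ξ (3*t+1) ω)
          = if CIAFTP.coal x0 β (t+1) (ξv ω) then 0
            else ENNReal.ofReal (CIAFTP.vv x0 β (CIAFTP.DD x0 (t+1) (ξv ω))) := rfl
      have hFX : F (X ω) (Y ω)
          = ENNReal.ofReal (Set.indicator {g | CIAFTP.AA x0 β t g} (fun _ => (1:ℝ)) (ξv ω))
            * (if CIAFTP.coal x0 β (t+1) (ξv ω) then 0
                else ENNReal.ofReal (CIAFTP.vv x0 β (CIAFTP.DD x0 (t+1) (ξv ω)))) := by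
        simp only [hFdef, hXdef, hYdef]
        rw [hPsi]
      rw [hFX]
      by_cases hAt : CIAFTP.AA x0 β t (ξv ω)
      · have hAt' : ξv ω ∈ {g | CIAFTP.AA x0 β t g} := hAt
        rw [Set.indicator_of_mem hAt', ENNReal.ofReal_one, one_mul]
        by_cases hco : CIAFTP.coal x0 β (t+1) (ξv ω)
        · have hnot : ξv ω ∉ {g | CIAFTP.AA x0 β (t+1) g} :=
            fun h => ((CIAFTP.AA_succ x0 β t (ξv ω)).mp h).2 hco
          rw [Set.indicator_of_notMem hnot, if_pos hco]
        · have hyes : ξv ω ∈ {g | CIAFTP.AA x0 β (t+1) g} :=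
            (CIAFTP.AA_succ x0 β t (ξv ω)).mpr ⟨hAt, hco⟩
          rw [Set.indicator_of_mem hyes, if_neg hco]
      · have hAt' : ξv ω ∉ {g | CIAFTP.AA x0 β t g} := hAt
        have hnot : ξv ω ∉ {g | CIAFTP.AA x0 β (t+1) g} :=
          fun h => hAt ((CIAFTP.AA_succ x0 β t (ξv ω)).mp h).1
        rw [Set.indicator_of_notMem hnot, Set.indicator_of_notMem hAt',
          ENNReal.ofReal_zero, zero_mul]
    -- a.e. lower bound on the first coordinate of X
    have hsetmeas : MeasurableSet {p : ℤ × ℝ | x0 - 1 ≤ p.1} :=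
      measurable_fst (show MeasurableSet {x : ℤ | x0 - 1 ≤ x} from trivial)
    have hmapae : ∀ᵐ p ∂(Measure.map X ℙ), x0 - 1 ≤ p.1 := by
      rw [MeasureTheory.ae_map_iff hXmeas.aemeasurable hsetmeas]
      exact hae2.mono (fun ω h => CIAFTP.DD_ge x0 t (show ξv ω 2 ∈ Set.Ioo (0:ℝ) 1 from h))
    -- main estimate: W (t+1) ≤ R t
    have hW1 : W (t+1) ≤ ∫⁻ ω, ENNReal.ofReal ((X ω).2)
        * ENNReal.ofReal (CIAFTP.vv x0 β (CIAFTP.DD x0 t (ξv ω)) - 1) ∂ℙ := by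
      have hGmeas : Measurable (fun p : ℤ × ℝ => ENNReal.ofReal p.2
          * ENNReal.ofReal (CIAFTP.vv x0 β p.1 - 1)) :=
        (ENNReal.measurable_ofReal.comp measurable_snd).mul
          ((measurable_from_top (f := fun x : ℤ => ENNReal.ofReal (CIAFTP.vv x0 β x - 1))).comp
            measurable_fst)
      calc W (t+1) = ∫⁻ ω, F (X ω) (Y ω) ∂ℙ := lintegral_congr hptwise
        _ = ∫⁻ z, F z.1 z.2 ∂(Measure.map (fun ω => (X ω, Y ω)) ℙ) :=
            (lintegral_map hFmeas (hXmeas.prodMk hYmeas)).symm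
        _ = ∫⁻ z, F z.1 z.2 ∂((Measure.map X ℙ).prod (CIAFTP.unif.prod CIAFTP.unif)) := by
            rw [hXYlaw]
        _ = ∫⁻ p, ∫⁻ q, F p q ∂(CIAFTP.unif.prod CIAFTP.unif) ∂(Measure.map X ℙ) :=
            MeasureTheory.lintegral_prod _ hFmeas.aemeasurable
        _ ≤ ∫⁻ p, ENNReal.ofReal p.2 * ENNReal.ofReal (CIAFTP.vv x0 β p.1 - 1)
              ∂(Measure.map X ℙ) := by
            refine lintegral_mono_ae (hmapae.mono (fun p hp => ?_))
            rw [show (∫⁻ q, F p q ∂(CIAFTP.unif.prod CIAFTP.unif))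
                = ENNReal.ofReal p.2 * ∫⁻ q, CIAFTP.Psi x0 β p.1 q ∂(CIAFTP.unif.prod CIAFTP.unif)
              from lintegral_const_mul _ (CIAFTP.measurable_Psi x0 β p.1)]
            exact mul_le_mul_right (CIAFTP.inner_bound x0 β hβ hx02 hp) _
        _ = ∫⁻ ω, ENNReal.ofReal ((X ω).2)
              * ENNReal.ofReal (CIAFTP.vv x0 β (CIAFTP.DD x0 t (ξv ω)) - 1) ∂ℙ := by
            rw [lintegral_map hGmeas hXmeas]
    -- and R t + ℙ (Aset t) ≤ W t
    have hW2 : (∫⁻ ω, ENNReal.ofReal ((X ω).2)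
        * ENNReal.ofReal (CIAFTP.vv x0 β (CIAFTP.DD x0 t (ξv ω)) - 1) ∂ℙ) + ℙ (Aset t)
          ≤ W t := by
      have hmeas1 : Measurable (fun ω => ENNReal.ofReal ((X ω).2)
          * ENNReal.ofReal (CIAFTP.vv x0 β (CIAFTP.DD x0 t (ξv ω)) - 1)) := by
        refine Measurable.mul (f := fun ω => ENNReal.ofReal ((X ω).2)) ?_ ?_
        · exact ENNReal.measurable_ofReal.comp (measurable_snd.comp hXmeas)
        · exact (measurable_from_top
            (f := fun x : ℤ => ENNReal.ofReal (CIAFTP.vv x0 β x - 1))).comp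
            ((CIAFTP.measurable_DD x0 t).comp hξvmeas)
      rw [← lintegral_indicator_one (hAsetMeas t),
        ← lintegral_add_left hmeas1]
      refine lintegral_mono_ae (hae2.mono (fun ω hω => ?_))
      have hD1 : x0 - 1 ≤ CIAFTP.DD x0 t (ξv ω) :=
        CIAFTP.DD_ge x0 t (show ξv ω 2 ∈ Set.Ioo (0:ℝ) 1 from hω)
      have hvv2 : (2:ℝ) ≤ CIAFTP.vv x0 β (CIAFTP.DD x0 t (ξv ω)) := by
        have hcast : ((x0:ℝ)) - 1 ≤ ((CIAFTP.DD x0 t (ξv ω) : ℤ) : ℝ) := by exact_mod_cast hD1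
        have hc2 := CIAFTP.c_ge_two hβ hx02
        unfold CIAFTP.vv
        nlinarith
      by_cases hAt : CIAFTP.AA x0 β t (ξv ω)
      · have hAt' : ξv ω ∈ {g | CIAFTP.AA x0 β t g} := hAt
        have h1 : (X ω).2 = 1 := by
          simp only [hXdef]; exact Set.indicator_of_mem hAt' _
        have h2 : Set.indicator (Aset t) (1 : Ω → ℝ≥0∞) ω = 1 := by
          rw [Set.indicator_of_mem (show ω ∈ Aset t from hAt')]; rfl
        have h3 : Set.indicator {g | CIAFTP.AA x0 β t g}
            (fun g => ENNReal.ofReal (CIAFTP.vv x0 β (CIAFTP.DD x0 t g))) (ξv ω)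
            = ENNReal.ofReal (CIAFTP.vv x0 β (CIAFTP.DD x0 t (ξv ω))) :=
          Set.indicator_of_mem hAt' _
        rw [h1, h2, h3, ENNReal.ofReal_one, one_mul,
          show (1:ℝ≥0∞) = ENNReal.ofReal 1 from ENNReal.ofReal_one.symm,
          ← ENNReal.ofReal_add (by linarith) (by norm_num)]
        exact ENNReal.ofReal_le_ofReal (by linarith)
      · have hAt' : ξv ω ∉ {g | CIAFTP.AA x0 β t g} := hAt
        have h1 : (X ω).2 = 0 := by
          simp only [hXdef]; exact Set.indicator_of_notMem hAt' _
        have h2 : Set.indicator (Aset t) (1 : Ω → ℝ≥0∞) ω = 0 :=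
          Set.indicator_of_notMem (show ω ∉ Aset t from hAt') _
        rw [h1, h2, ENNReal.ofReal_zero, zero_mul, add_zero]
        exact zero_le
    exact le_trans (add_le_add_left hW1 _) hW2
  -- summing up
  have main : ∀ n, W n + ∑ t ∈ Finset.range n, ℙ (Aset t) ≤ W 0 := by
    intro n
    induction n with
    | zero => simp
    | succ n ih =>
        calc W (n+1) + ∑ t ∈ Finset.range (n+1), ℙ (Aset t)
            = (W (n+1) + ℙ (Aset n)) + ∑ t ∈ Finset.range n, ℙ (Aset t) := by
              rw [Finset.sum_range_succ]; ring
          _ ≤ W n + ∑ t ∈ Finset.range n, ℙ (Aset t) := add_le_add_left (key n) _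
          _ ≤ W 0 := ih
  have hsum : ∑' t, ℙ (Aset t) ≤ W 0 :=
    Summable.tsum_le_of_sum_range_le ENNReal.summable
      (fun n => le_trans (le_add_self) (main n))
  -- E[T] ≤ ∑' ℙ (Aset t)
  have hTled : ∀ ω, (T ω : ℝ≥0∞) ≤ ∑' t, Set.indicator (Aset t) (fun _ => (1:ℝ≥0∞)) ω := by
    intro ω
    rw [CIAFTP.natCast_tsum (T ω)]
    refine ENNReal.tsum_le_tsum (fun t => ?_)
    by_cases h : t < T ω
    · rw [if_pos h]
      have hmem : ω ∈ Aset t := by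
        show CIAFTP.AA x0 β t (ξv ω)
        intro s hs1 hs2 hcoal
        obtain ⟨s', rfl⟩ : ∃ s', s = s' + 1 := ⟨s - 1, by omega⟩
        have hUs : U (s'+1) ω ≤ ((D (s'+1) ω : ℝ) + 1) ^ (-β) := by
          rw [hUeq, hDeq]
          exact hcoal
        have hmem2 : (s'+1) ∈ {t : ℕ | 1 ≤ t ∧ U t ω ≤ ((D t ω : ℝ) + 1) ^ (-β)} :=
          ⟨by omega, hUs⟩
        have := Nat.sInf_le hmem2
        rw [← hT ω] at this
        omega
      rw [Set.indicator_of_mem hmem]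
    · rw [if_neg h]; exact zero_le
  calc ∫⁻ ω, (T ω : ℝ≥0∞) ∂ℙ
      ≤ ∫⁻ ω, ∑' t, Set.indicator (Aset t) (fun _ => (1:ℝ≥0∞)) ω ∂ℙ := lintegral_mono hTled
    _ = ∑' t, ∫⁻ ω, Set.indicator (Aset t) (fun _ => (1:ℝ≥0∞)) ω ∂ℙ :=
        lintegral_tsum (fun t => (measurable_const.indicator (hAsetMeas t)).aemeasurable)
    _ = ∑' t, ℙ (Aset t) := tsum_congr (fun t => lintegral_indicator_one (hAsetMeas t))
    _ ≤ W 0 := hsum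
    _ ≤ ENNReal.ofReal (2 * ((x0 : ℝ) + 1) ^ β + 3) := by
        have hW0 : W 0 = ∫⁻ ω, ENNReal.ofReal (CIAFTP.vv x0 β
            (x0 - 2 + ⌈-Real.log (ξ 2 ω) / Real.log 2⌉)) ∂ℙ := by
          refine lintegral_congr (fun ω => ?_)
          rw [Set.indicator_of_mem (show ξv ω ∈ {g | CIAFTP.AA x0 β 0 g} from
            CIAFTP.AA_zero x0 β (ξv ω))]
          rfl
        have hmeasW0 : Measurable (fun u : ℝ => ENNReal.ofReal (CIAFTP.vv x0 β
            (x0 - 2 + ⌈-Real.log u / Real.log 2⌉))) :=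
          (measurable_from_top (f := fun z : ℤ => ENNReal.ofReal (CIAFTP.vv x0 β (x0 - 2 + z)))).comp
            CIAFTP.measurable_ceil_log
        have hchg : ∫⁻ ω, ENNReal.ofReal (CIAFTP.vv x0 β
            (x0 - 2 + ⌈-Real.log (ξ 2 ω) / Real.log 2⌉)) ∂ℙ
            = ∫⁻ u, ENNReal.ofReal (CIAFTP.vv x0 β
              (x0 - 2 + ⌈-Real.log u / Real.log 2⌉)) ∂(Measure.map (ξ 2) ℙ) :=
          (lintegral_map hmeasW0 (hξm 2)).symm
        rw [hW0, hchg, hξd 2]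
        exact CIAFTP.W0_bound hβ hx02
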